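/- arXiv:1708.02650 — 5 statements merged into one kernel-verified Lean document; each statement's English description precedes it below -/
import Mathlib

section
/- Let k be a field, n ≥ 1, and B, C associative unital k-algebras. Let ι_B : Mat_n(k) → Mat_n(B) and ι_C : Mat_n(k) → Mat_n(C) be the canonical unital k-algebra maps (entrywise via k → B, k → C). Then every unital k-algebra homomorphism F : Mat_n(B) → Mat_n(C) satisfying F ∘ ι_B = ι_C is of the form F = Mat_n(g) (g applied entrywise) for a unique unital k-algebra homomorphism g : B → C. In other words, B ↦ Mat_n(B) is a fully faithful functor from k-algebras to k-algebras under Mat_n(k). -/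
/-!
STATEMENT 6: Every unital `k`-algebra homomorphism `F : Mat_n(B) → Mat_n(C)` compatible
with the canonical maps from `Mat_n(k)` is `Mat_n(g)` (entrywise application) for a unique
`k`-algebra homomorphism `g : B → C`.
-/

private lemma map_stdBasisMatrix_aux {m : Type*} [DecidableEq m] {α β : Type*} [Zero α] [Zero β]
    (f : α → β) (hf : f 0 = 0) (i j : m) (a : α) :
    (Matrix.single i j a).map f = Matrix.single i j (f a) := by
  ext i' j'
  by_cases h : i = i' ∧ j = j'
  · obtain ⟨rfl, rfl⟩ := h
    simp [Matrix.map_apply]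
  · rw [Matrix.map_apply, Matrix.single_apply_of_ne _ _ _ _ _ h,
      Matrix.single_apply_of_ne _ _ _ _ _ h, hf]

theorem matrix_algebra_fully_faithful
    (k : Type*) [Field k] (n : ℕ) (hn : 1 ≤ n)
    (B C : Type*) [Ring B] [Algebra k B] [Ring C] [Algebra k C]
    (F : Matrix (Fin n) (Fin n) B →ₐ[k] Matrix (Fin n) (Fin n) C)
    (hF : F.comp (AlgHom.mapMatrix (Algebra.ofId k B))
        = AlgHom.mapMatrix (Algebra.ofId k C)) :
    ∃! g : B →ₐ[k] C, F = AlgHom.mapMatrix g := by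
  set i0 : Fin n := ⟨0, hn⟩ with hi0
  -- F sends matrix units to matrix units
  have hE : ∀ i j : Fin n, F (Matrix.single i j (1 : B)) =
      Matrix.single i j (1 : C) := by
    intro i j
    have h := congrArg (fun φ : Matrix (Fin n) (Fin n) k →ₐ[k] Matrix (Fin n) (Fin n) C =>
      φ (Matrix.single i j (1 : k))) hF
    simp only [AlgHom.comp_apply, AlgHom.mapMatrix_apply] at h
    rw [map_stdBasisMatrix_aux _ (map_zero _), map_stdBasisMatrix_aux _ (map_zero _)] at h
    simpa using h
  -- corner compression
  have hcorner : ∀ b : B, F (Matrix.single i0 i0 b) =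
      Matrix.single i0 i0 ((F (Matrix.single i0 i0 b)) i0 i0) := by
    intro b
    have h1 : Matrix.single i0 i0 b =
        Matrix.single i0 i0 (1 : B) * Matrix.single i0 i0 b *
          Matrix.single i0 i0 (1 : B) := by
      rw [Matrix.single_mul_single_same, Matrix.single_mul_single_same, one_mul, mul_one]
    have h2 : F (Matrix.single i0 i0 b) =
        Matrix.single i0 i0 (1 : C) * F (Matrix.single i0 i0 b) *
          Matrix.single i0 i0 (1 : C) := by
      conv_lhs => rw [h1]
      rw [map_mul, map_mul, hE]
    rw [h2]
    ext i' j'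
    by_cases h : i' = i0 ∧ j' = i0
    · obtain ⟨rfl, rfl⟩ := h
      rw [Matrix.mul_single_apply_same, Matrix.single_mul_apply_same]
      simp
    · rw [Matrix.single_apply_of_ne _ _ _ _ _
        (fun hc => h ⟨hc.1.symm, hc.2.symm⟩)]
      rcases not_and_or.mp h with h' | h'
      · rw [mul_assoc, Matrix.single_mul_apply_of_ne _ _ _ _ _ h' _]
      · rw [Matrix.mul_single_apply_of_ne _ _ _ _ _ h' _]
  -- define g
  let gfun : B → C := fun b => (F (Matrix.single i0 i0 b)) i0 i0
  have key : ∀ (i j : Fin n) (b : B),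
      F (Matrix.single i j b) = Matrix.single i j (gfun b) := by
    intro i j b
    have h1 : Matrix.single i j b =
        Matrix.single i i0 (1 : B) * Matrix.single i0 i0 b *
          Matrix.single i0 j (1 : B) := by
      rw [Matrix.single_mul_single_same, Matrix.single_mul_single_same, one_mul, mul_one]
    rw [h1, map_mul, map_mul, hE, hE, hcorner]
    rw [Matrix.single_mul_single_same, Matrix.single_mul_single_same, one_mul, mul_one]
  have gadd : ∀ x y : B, gfun (x + y) = gfun x + gfun y := by
    intro x y
    simp only [gfun, Matrix.single_add, map_add, Matrix.add_apply]
  have gmul : ∀ x y : B, gfun (x * y) = gfun x * gfun y := by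
    intro x y
    have : Matrix.single i0 i0 (x * y) =
        Matrix.single i0 i0 x * Matrix.single i0 i0 y := by
      rw [Matrix.single_mul_single_same]
    simp only [gfun]
    rw [this, map_mul, key, key, Matrix.single_mul_single_same, Matrix.single_apply_same]
    simp
  have gcomm : ∀ a : k, gfun (algebraMap k B a) = algebraMap k C a := by
    intro a
    have h := congrArg (fun φ : Matrix (Fin n) (Fin n) k →ₐ[k] Matrix (Fin n) (Fin n) C =>
      φ (Matrix.single i0 i0 a)) hF
    simp only [AlgHom.comp_apply, AlgHom.mapMatrix_apply] at h
    rw [map_stdBasisMatrix_aux _ (map_zero _), map_stdBasisMatrix_aux _ (map_zero _)] at h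
    simp only [gfun]
    have hB : (Algebra.ofId k B) a = algebraMap k B a := rfl
    have hC : (Algebra.ofId k C) a = algebraMap k C a := rfl
    rw [hB, hC] at h
    rw [h, Matrix.single_apply_same]
  have gone : gfun 1 = 1 := by
    simpa using gcomm 1
  let g : B →ₐ[k] C :=
    { toFun := gfun
      map_one' := gone
      map_mul' := gmul
      map_zero' := by simp [gfun, Matrix.single_zero]
      map_add' := gadd
      commutes' := gcomm }
  refine ⟨g, ?_, ?_⟩
  · apply AlgHom.ext
    intro M
    conv_lhs => rw [Matrix.matrix_eq_sum_single M]
    rw [map_sum]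
    simp only [Finset.sum_congr, map_sum, key]
    rw [AlgHom.mapMatrix_apply]
    ext i' j'
    simp only [Matrix.map_apply, Matrix.sum_apply, Matrix.single, Matrix.of_apply,
      AlgHom.coe_mk, RingHom.coe_mk, MonoidHom.coe_mk, OneHom.coe_mk, g]
    simp [ite_and, Finset.sum_ite_eq, Finset.sum_ite_eq']
  · intro g' hg'
    ext b
    have := congrArg (fun φ : Matrix (Fin n) (Fin n) B →ₐ[k] Matrix (Fin n) (Fin n) C =>
      (φ (Matrix.single i0 i0 b)) i0 i0) hg'
    simp only [AlgHom.mapMatrix_apply] at this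
    rw [map_stdBasisMatrix_aux _ (map_zero _), Matrix.single_apply_same] at this
    exact this.symm
end

section
/- Let k be a field, A an associative unital k-algebra, and n ≥ 1. There exist an associative unital k-algebra √A and a k-algebra homomorphism j : A → Mat_n(√A) such that for every associative unital k-algebra B, the map g ↦ Mat_n(g) ∘ j is a bijection from the set of unital k-algebra homomorphisms √A → B onto the set of unital k-algebra homomorphisms A → Mat_n(B). That is, the functor B ↦ Hom_{Alg_k}(A, Mat_n(B)) on associative k-algebras is representable, with representing object √A (the matrix reduction of A). -/
/-!
STATEMENT 7: The functor `B ↦ Hom_{Alg_k}(A, Mat_n(B))` on associative `k`-algebras is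
representable: there exist a `k`-algebra `√A` and `j : A → Mat_n(√A)` such that
`g ↦ Mat_n(g) ∘ j` is a bijection `Hom_{Alg_k}(√A, B) ≅ Hom_{Alg_k}(A, Mat_n(B))` for all `B`.
-/

universe u

/-- A bundled associative unital `k`-algebra. -/
structure AlgPkg (k : Type u) [Field k] : Type (u + 1) where
  carrier : Type u
  [ringInst : Ring carrier]
  [algInst : Algebra k carrier]

attribute [instance] AlgPkg.ringInst AlgPkg.algInst

namespace MatRed

variable (k : Type u) [Field k] (A : Type u) [Ring A] [Algebra k A] (n : ℕ)

/-- Free algebra on generators `a_{ij}` for `a ∈ A`, `i j : Fin n`. -/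
abbrev F : Type u := FreeAlgebra k (A × Fin n × Fin n)

/-- The generator `a_{ij}`. -/
def gen (a : A) (i j : Fin n) : F k A n := FreeAlgebra.ι k (a, i, j)

/-- Defining relations of the matrix reduction. -/
inductive Rel : F k A n → F k A n → Prop
  | one (i j : Fin n) : Rel (gen k A n 1 i j) (if i = j then 1 else 0)
  | add (a b : A) (i j : Fin n) :
      Rel (gen k A n (a + b) i j) (gen k A n a i j + gen k A n b i j)
  | smul (c : k) (a : A) (i j : Fin n) :
      Rel (gen k A n (c • a) i j) (c • gen k A n a i j)
  | mul (a b : A) (i j : Fin n) :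
      Rel (gen k A n (a * b) i j) (∑ l, gen k A n a i l * gen k A n b l j)

/-- The matrix reduction algebra. -/
abbrev R : Type u := RingQuot (Rel k A n)

/-- Quotient map. -/
def mk : F k A n →ₐ[k] R k A n := RingQuot.mkAlgHom k (Rel k A n)

/-- The image of the generator `a_{ij}` in `R`. -/
def e (a : A) (i j : Fin n) : R k A n := mk k A n (gen k A n a i j)

lemma e_rel {x y : F k A n} (h : Rel k A n x y) : mk k A n x = mk k A n y :=
  RingQuot.mkAlgHom_rel k h

lemma e_one (i j : Fin n) : e k A n 1 i j = if i = j then 1 else 0 := by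
  have := e_rel k A n (Rel.one i j)
  simpa [e, map_one, map_zero, apply_ite (mk k A n)] using this

lemma e_add (a b : A) (i j : Fin n) :
    e k A n (a + b) i j = e k A n a i j + e k A n b i j := by
  have := e_rel k A n (Rel.add a b i j)
  simpa [e, map_add] using this

lemma e_smul (c : k) (a : A) (i j : Fin n) :
    e k A n (c • a) i j = c • e k A n a i j := by
  have := e_rel k A n (Rel.smul c a i j)
  simpa [e, map_smul] using this

lemma e_mul (a b : A) (i j : Fin n) :
    e k A n (a * b) i j = ∑ l, e k A n a i l * e k A n b l j := by
  have := e_rel k A n (Rel.mul a b i j)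
  simpa [e, map_sum, map_mul] using this

lemma e_zero (i j : Fin n) : e k A n 0 i j = 0 := by
  have h := e_smul k A n 0 0 i j
  simpa using h

/-- The map `j : A → Mat_n(R)`. -/
def J : A →ₐ[k] Matrix (Fin n) (Fin n) (R k A n) where
  toFun a := Matrix.of fun i j => e k A n a i j
  map_one' := by
    ext i j
    simp [Matrix.one_apply, e_one]
  map_mul' a b := by
    ext i j
    simp [Matrix.mul_apply, e_mul]
  map_zero' := by
    ext i j
    simp [e_zero]
  map_add' a b := by
    ext i j
    simp [e_add]
  commutes' c := by
    ext i j
    have h1 : algebraMap k A c = c • (1 : A) := Algebra.algebraMap_eq_smul_one c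
    simp only [Matrix.algebraMap_matrix_apply, Matrix.of_apply, h1, e_smul, e_one]
    by_cases hij : i = j <;>
      simp [hij, Algebra.algebraMap_eq_smul_one]

variable {B : Type u} [Ring B] [Algebra k B]

/-- Lift of an algebra map `A → Mat_n(B)` to the free algebra. -/
def liftF (f : A →ₐ[k] Matrix (Fin n) (Fin n) B) : F k A n →ₐ[k] B :=
  FreeAlgebra.lift k (fun x => f x.1 x.2.1 x.2.2)

lemma liftF_gen (f : A →ₐ[k] Matrix (Fin n) (Fin n) B) (a : A) (i j : Fin n) :
    liftF k A n f (gen k A n a i j) = f a i j := by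
  simp [liftF, gen]

lemma liftF_rel (f : A →ₐ[k] Matrix (Fin n) (Fin n) B) :
    ∀ ⦃x y : F k A n⦄, Rel k A n x y → liftF k A n f x = liftF k A n f y := by
  intro x y h
  induction h with
  | one i j =>
      rw [liftF_gen, map_one]
      by_cases hij : i = j <;> simp [hij, Matrix.one_apply]
  | add a b i j =>
      simp [liftF_gen, map_add, Matrix.add_apply]
  | smul c a i j =>
      simp [liftF_gen, map_smul, Matrix.smul_apply]
  | mul a b i j =>
      simp [liftF_gen, map_mul, Matrix.mul_apply]

/-- Lift of an algebra map `A → Mat_n(B)` to `R`. -/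
def liftR (f : A →ₐ[k] Matrix (Fin n) (Fin n) B) : R k A n →ₐ[k] B :=
  RingQuot.liftAlgHom k ⟨liftF k A n f, liftF_rel k A n f⟩

lemma liftR_e (f : A →ₐ[k] Matrix (Fin n) (Fin n) B) (a : A) (i j : Fin n) :
    liftR k A n f (e k A n a i j) = f a i j := by
  rw [e, mk, liftR, RingQuot.liftAlgHom_mkAlgHom_apply, liftF_gen]

end MatRed

theorem matrix_reduction_representable
    (k : Type u) [Field k] (A : Type u) [Ring A] [Algebra k A]
    (n : ℕ) (hn : 1 ≤ n) :
    ∃ (R : AlgPkg k) (j : A →ₐ[k] Matrix (Fin n) (Fin n) R.carrier),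
      ∀ (B : Type u) [Ring B] [Algebra k B],
        Function.Bijective
          (fun g : R.carrier →ₐ[k] B => (AlgHom.mapMatrix g).comp j) := by
  refine ⟨⟨MatRed.R k A n⟩, MatRed.J k A n, ?_⟩
  intro B _ _
  rw [Function.bijective_iff_has_inverse]
  refine ⟨MatRed.liftR k A n, ?_, ?_⟩
  · -- left inverse
    intro g
    apply RingQuot.ringQuot_ext'
    apply FreeAlgebra.hom_ext
    funext x
    obtain ⟨a, i, j⟩ := x
    show MatRed.liftR k A n _ (MatRed.mk k A n (MatRed.gen k A n a i j))
        = g (MatRed.mk k A n (MatRed.gen k A n a i j))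
    rw [show MatRed.mk k A n (MatRed.gen k A n a i j) = MatRed.e k A n a i j from rfl,
      MatRed.liftR_e]
    rfl
  · -- right inverse
    intro f
    apply AlgHom.ext
    intro a
    ext i j
    show MatRed.liftR k A n f (MatRed.e k A n a i j) = f a i j
    rw [MatRed.liftR_e]
end

section
/- Let k be a field, A an associative unital k-algebra, and n ≥ 1. There exist a commutative unital k-algebra A_V and a k-algebra homomorphism π : A → Mat_n(A_V) such that for every commutative unital k-algebra B, the map φ ↦ Mat_n(φ) ∘ π is a bijection from the set of k-algebra homomorphisms A_V → B onto the set of unital k-algebra homomorphisms A → Mat_n(B). That is, the representation functor Rep_V A : CommAlg_k → Sets, B ↦ Hom_{Alg_k}(A, Mat_n(B)), is representable, with representing object the coordinate ring A_V = k[Rep(A, V)] of the scheme of n-dimensional representations of A, and π is the universal representation. -/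
/-!
STATEMENT 8: The representation functor `Rep_V A : CommAlg_k → Sets`,
`B ↦ Hom_{Alg_k}(A, Mat_n(B))`, is representable by a commutative `k`-algebra `A_V`
together with the universal representation `π : A → Mat_n(A_V)`.
-/

universe u

/-- A bundled commutative unital `k`-algebra. -/
structure CommAlgPkg (k : Type u) [Field k] : Type (u + 1) where
  carrier : Type u
  [ringInst : CommRing carrier]
  [algInst : Algebra k carrier]

attribute [instance] CommAlgPkg.ringInst CommAlgPkg.algInst

noncomputable section RepAux

open MvPolynomial

variable (k : Type u) [Field k] (A : Type u) [Ring A] [Algebra k A] (n : ℕ)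

/-- Relations defining the coordinate ring of the representation scheme. -/
def repRels : Set (MvPolynomial (A × Fin n × Fin n) k) :=
  { p | ∃ i j, p = X ((1 : A), i, j) - if i = j then 1 else 0 } ∪
  { p | ∃ a b i j, p = X (a + b, i, j) - X (a, i, j) - X (b, i, j) } ∪
  { p | ∃ (c : k) (a : A) (i j : Fin n), p = X (c • a, i, j) - C c * X (a, i, j) } ∪
  { p | ∃ a b i j, p = X (a * b, i, j) - ∑ l, X (a, i, l) * X (b, l, j) }

def repIdeal : Ideal (MvPolynomial (A × Fin n × Fin n) k) := Ideal.span (repRels k A n)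

def RepRing : Type u := MvPolynomial (A × Fin n × Fin n) k ⧸ repIdeal k A n

instance : CommRing (RepRing k A n) := Ideal.Quotient.commRing _
instance : Algebra k (RepRing k A n) := Ideal.Quotient.algebra k

variable {k A n}

lemma repRels_one_mem (i j : Fin n) :
    X ((1 : A), i, j) - (if i = j then 1 else 0) ∈ repIdeal k A n :=
  Ideal.subset_span (by
    simp only [repRels, Set.mem_union, Set.mem_setOf_eq]
    exact Or.inl (Or.inl (Or.inl ⟨i, j, rfl⟩)))

lemma repRels_add_mem (a b : A) (i j : Fin n) :
    X (a + b, i, j) - X (a, i, j) - X (b, i, j) ∈ repIdeal k A n :=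
  Ideal.subset_span (by
    simp only [repRels, Set.mem_union, Set.mem_setOf_eq]
    exact Or.inl (Or.inl (Or.inr ⟨a, b, i, j, rfl⟩)))

lemma repRels_smul_mem (c : k) (a : A) (i j : Fin n) :
    X (c • a, i, j) - C c * X (a, i, j) ∈ repIdeal k A n :=
  Ideal.subset_span (by
    simp only [repRels, Set.mem_union, Set.mem_setOf_eq]
    exact Or.inl (Or.inr ⟨c, a, i, j, rfl⟩))

lemma repRels_mul_mem (a b : A) (i j : Fin n) :
    X (a * b, i, j) - ∑ l, X (a, i, l) * X (b, l, j) ∈ repIdeal k A n :=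
  Ideal.subset_span (by
    simp only [repRels, Set.mem_union, Set.mem_setOf_eq]
    exact Or.inr ⟨a, b, i, j, rfl⟩)

/-- shorthand for the quotient map -/
def repMk : MvPolynomial (A × Fin n × Fin n) k →+* RepRing k A n :=
  Ideal.Quotient.mk (repIdeal k A n)

lemma repMk_one_entry (i j : Fin n) :
    repMk (X ((1 : A), i, j)) = (if i = j then 1 else 0 : RepRing k A n) := by
  have h := repRels_one_mem (k := k) (A := A) i j
  have : repMk (X ((1 : A), i, j)) = repMk (if i = j then 1 else 0) :=
    Ideal.Quotient.eq.mpr h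
  rw [this, apply_ite (repMk (k := k) (A := A) (n := n)), map_one, map_zero]

variable (k A n) in
/-- The universal representation. -/
def repHom : A →ₐ[k] Matrix (Fin n) (Fin n) (RepRing k A n) where
  toFun a := Matrix.of fun i j => repMk (X (a, i, j))
  map_one' := by
    ext i j
    simp only [Matrix.of_apply, Matrix.one_apply]
    exact repMk_one_entry i j
  map_mul' a b := by
    ext i j
    simp only [Matrix.of_apply, Matrix.mul_apply]
    have : (∑ l, repMk (X (a, i, l)) * repMk (X (b, l, j)) : RepRing k A n)
        = repMk (∑ l, X (a, i, l) * X (b, l, j)) := by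
      rw [map_sum]; simp
    rw [this]
    exact Ideal.Quotient.eq.mpr (repRels_mul_mem a b i j)
  map_zero' := by
    ext i j
    simp only [Matrix.of_apply, Matrix.zero_apply]
    have h := repRels_add_mem (k := k) (0 : A) (0 : A) i j
    rw [add_zero, sub_self, zero_sub] at h
    exact Ideal.Quotient.eq_zero_iff_mem.mpr (neg_mem_iff.mp h)
  map_add' a b := by
    ext i j
    simp only [Matrix.of_apply, Matrix.add_apply]
    have : (repMk (X (a, i, j)) + repMk (X (b, i, j)) : RepRing k A n)
        = repMk (X (a, i, j) + X (b, i, j)) := by rw [map_add]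
    rw [this]
    refine Ideal.Quotient.eq.mpr ?_
    have h := repRels_add_mem (k := k) a b i j
    rwa [sub_sub] at h
  commutes' c := by
    ext i j
    simp only [Matrix.of_apply, Matrix.algebraMap_matrix_apply]
    have h1 : (algebraMap k A) c = c • (1 : A) := Algebra.algebraMap_eq_smul_one c
    rw [h1]
    have h2 : repMk (X (c • (1 : A), i, j)) = repMk (C c * X ((1 : A), i, j)) :=
      Ideal.Quotient.eq.mpr (repRels_smul_mem c 1 i j)
    rw [h2, map_mul, repMk_one_entry]
    have hc : repMk (C c) = algebraMap k (RepRing k A n) c := rfl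
    rw [hc, mul_ite, mul_one, mul_zero]

end RepAux

theorem rep_functor_representable
    (k : Type u) [Field k] (A : Type u) [Ring A] [Algebra k A]
    (n : ℕ) (hn : 1 ≤ n) :
    ∃ (R : CommAlgPkg k) (π : A →ₐ[k] Matrix (Fin n) (Fin n) R.carrier),
      ∀ (B : Type u) [CommRing B] [Algebra k B],
        Function.Bijective
          (fun φ : R.carrier →ₐ[k] B => (AlgHom.mapMatrix φ).comp π) := by
  classical
  refine ⟨⟨RepRing k A n⟩, repHom k A n, ?_⟩
  intro B _ _
  have key : ∀ (φ : RepRing k A n →ₐ[k] B) (a : A) (i j : Fin n),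
      ((AlgHom.mapMatrix φ).comp (repHom k A n)) a i j
        = φ (Ideal.Quotient.mk (repIdeal k A n) (MvPolynomial.X (a, i, j))) := by
    intro φ a i j
    rfl
  constructor
  · intro φ₁ φ₂ h
    dsimp only at h
    apply Ideal.Quotient.algHom_ext k
    apply MvPolynomial.algHom_ext
    rintro ⟨a, i, j⟩
    have h1 := key φ₁ a i j
    have h2 := key φ₂ a i j
    rw [h] at h1
    exact h1.symm.trans h2
  · intro ψ
    let ev : MvPolynomial (A × Fin n × Fin n) k →ₐ[k] B :=
      MvPolynomial.aeval (fun x => ψ x.1 x.2.1 x.2.2)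
    have hker : repIdeal k A n ≤ RingHom.ker ev.toRingHom := by
      rw [repIdeal, Ideal.span_le]
      rintro p hp
      simp only [repRels, Set.mem_union, Set.mem_setOf_eq] at hp
      simp only [SetLike.mem_coe, RingHom.mem_ker, AlgHom.toRingHom_eq_coe,
        RingHom.coe_coe]
      obtain ((⟨i, j, rfl⟩ | ⟨a, b, i, j, rfl⟩) | ⟨c, a, i, j, rfl⟩) | ⟨a, b, i, j, rfl⟩ := hp
      · simp only [ev, map_sub, MvPolynomial.aeval_X,
          apply_ite (MvPolynomial.aeval (R := k) fun x : A × Fin n × Fin n => ψ x.1 x.2.1 x.2.2),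
          map_one, map_zero]
        rw [Matrix.one_apply, sub_self]
      · simp only [ev, map_sub, MvPolynomial.aeval_X]
        rw [map_add, Matrix.add_apply, sub_sub, sub_self]
      · simp only [ev, map_sub, map_mul, MvPolynomial.aeval_X, MvPolynomial.aeval_C]
        rw [map_smul, Matrix.smul_apply, Algebra.smul_def, sub_self]
      · simp only [ev, map_sub, map_sum, map_mul, MvPolynomial.aeval_X]
        rw [Matrix.mul_apply, sub_self]
    have h0 : ∀ p ∈ repIdeal k A n, ev p = 0 := fun p hp => hker hp
    refine ⟨Ideal.Quotient.liftₐ (repIdeal k A n) ev h0, ?_⟩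
    dsimp only
    apply AlgHom.ext
    intro a
    apply Matrix.ext
    intro i j
    refine (key (Ideal.Quotient.liftₐ (repIdeal k A n) ev h0) a i j).trans ?_
    have hl : (Ideal.Quotient.liftₐ (repIdeal k A n) ev h0)
        ((Ideal.Quotient.mk (repIdeal k A n)) (MvPolynomial.X (a, i, j)))
        = ev (MvPolynomial.X (a, i, j)) := rfl
    exact hl.trans (by simp [ev])
end

section
/- Let k be a field, A an associative unital k-algebra, n ≥ 1, C a commutative unital k-algebra and ρ : A → Mat_n(C) a unital k-algebra homomorphism. For every A-bimodule M there exist a C-module M_V and an A-bimodule homomorphism μ : M → Mat_n(M_V) such that for every C-module L and every A-bimodule homomorphism f : M → Mat_n(L), there exists a unique C-linear map g : M_V → L with Mat_n(g) ∘ μ = f. That is, the Van den Bergh functor M ↦ M_V is well defined: for each A-bimodule M the functor L ↦ Hom_{A-bimod}(M, Mat_n(L)) on C-modules is representable, with representing object M_V (concretely M_V = M ⊗_{A^e} Mat_n(C)). -/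
/-!
STATEMENT 9: The Van den Bergh functor is well defined: given `ρ : A → Mat_n(C)` with `C`
commutative, for every `A`-bimodule `M` there exist a `C`-module `M_V` and an `A`-bimodule
map `μ : M → Mat_n(M_V)` such that every `A`-bimodule map `f : M → Mat_n(L)` into matrices
over a `C`-module `L` factors as `f = Mat_n(g) ∘ μ` for a unique `C`-linear `g : M_V → L`.
Here `Mat_n(L)` is an `A`-bimodule via `a·X·b = ρ(a) X ρ(b)`.
-/

universe u

open MulOpposite

/-- Left action of a matrix over `C` on a matrix with entries in a `C`-module:
`(P · X)_{ij} = Σ_l P_{il} • X_{lj}`. -/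
def matLSmul {C N : Type*} [CommRing C] [AddCommGroup N] [Module C N] {n : ℕ}
    (P : Matrix (Fin n) (Fin n) C) (X : Matrix (Fin n) (Fin n) N) :
    Matrix (Fin n) (Fin n) N :=
  Matrix.of fun i j => ∑ l : Fin n, P i l • X l j

/-- Right action of a matrix over `C` on a matrix with entries in a `C`-module:
`(X · P)_{ij} = Σ_l P_{lj} • X_{il}`. -/
def matRSmul {C N : Type*} [CommRing C] [AddCommGroup N] [Module C N] {n : ℕ}
    (X : Matrix (Fin n) (Fin n) N) (P : Matrix (Fin n) (Fin n) C) :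
    Matrix (Fin n) (Fin n) N :=
  Matrix.of fun i j => ∑ l : Fin n, P l j • X i l

/-- A bundled module over the commutative `k`-algebra `C`. -/
structure ModPkg (k : Type u) [Field k] (C : Type u) [CommRing C] [Algebra k C] :
    Type (u + 1) where
  carrier : Type u
  [acgInst : AddCommGroup carrier]
  [modkInst : Module k carrier]
  [modCInst : Module C carrier]
  [towerInst : IsScalarTower k C carrier]

attribute [instance] ModPkg.acgInst ModPkg.modkInst ModPkg.modCInst ModPkg.towerInst

section VdB

variable (k : Type u) [Field k] (A : Type u) [Ring A] [Algebra k A]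
    (n : ℕ)
    (C : Type u) [CommRing C] [Algebra k C]
    (ρ : A →ₐ[k] Matrix (Fin n) (Fin n) C)
    (M : Type u) [AddCommGroup M] [Module k M]
    [Module A M] [Module Aᵐᵒᵖ M] [SMulCommClass A Aᵐᵒᵖ M]
    [IsScalarTower k A M] [IsScalarTower k Aᵐᵒᵖ M]

/-- The free `C`-module on symbols `(m, i, j)`. -/
abbrev VdBFree : Type u := (M × Fin n × Fin n) →₀ C

/-- The submodule of relations defining `M_V`. -/
noncomputable def VdBRel : Submodule C (VdBFree n C M) :=
  Submodule.span C
    ( {x | ∃ m m' i j, x = Finsupp.single (m + m', i, j) 1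
          - Finsupp.single (m, i, j) 1 - Finsupp.single (m', i, j) 1}
    ∪ {x | ∃ (c : k) (m : M) (i j : Fin n), x = Finsupp.single (c • m, i, j) 1
          - algebraMap k C c • Finsupp.single (m, i, j) 1}
    ∪ {x | ∃ (a : A) (m : M) (i j : Fin n), x = Finsupp.single (a • m, i, j) 1
          - ∑ l, ρ a i l • Finsupp.single (m, l, j) 1}
    ∪ {x | ∃ (b : A) (m : M) (i j : Fin n), x = Finsupp.single (op b • m, i, j) 1
          - ∑ l, ρ b l j • Finsupp.single (m, i, l) 1} )

/-- The representing module `M_V = M ⊗_{A^e} Mat_n(C)` realized as a quotient. -/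
abbrev VdBMod : Type u := VdBFree n C M ⧸ VdBRel k A n C ρ M

/-- The generator of `M_V` attached to `(m, i, j)`. -/
noncomputable def vdbGen (m : M) (i j : Fin n) : VdBMod k A n C ρ M :=
  Submodule.Quotient.mk (Finsupp.single (m, i, j) 1)

lemma vdbGen_eq_mkQ (m : M) (i j : Fin n) :
    vdbGen k A n C ρ M m i j = (VdBRel k A n C ρ M).mkQ (Finsupp.single (m, i, j) 1) := rfl

lemma vdbRel_mkQ_eq_zero {x : VdBFree n C M} (hx : x ∈ VdBRel k A n C ρ M) :
    (VdBRel k A n C ρ M).mkQ x = 0 := by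
  simpa [Submodule.mkQ_apply, Submodule.Quotient.mk_eq_zero] using hx

lemma vdbGen_add (m m' : M) (i j : Fin n) :
    vdbGen k A n C ρ M (m + m') i j = vdbGen k A n C ρ M m i j + vdbGen k A n C ρ M m' i j := by
  have hmem : (Finsupp.single (m + m', i, j) 1
      - Finsupp.single (m, i, j) 1 - Finsupp.single (m', i, j) (1 : C))
      ∈ VdBRel k A n C ρ M :=
    Submodule.subset_span (Or.inl (Or.inl (Or.inl ⟨m, m', i, j, rfl⟩)))
  have := vdbRel_mkQ_eq_zero k A n C ρ M hmem
  simp only [map_sub] at this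
  simp only [vdbGen_eq_mkQ]
  linear_combination (norm := abel) this

lemma vdbGen_smul (c : k) (m : M) (i j : Fin n) :
    vdbGen k A n C ρ M (c • m) i j = algebraMap k C c • vdbGen k A n C ρ M m i j := by
  have hmem : (Finsupp.single (c • m, i, j) 1
      - algebraMap k C c • Finsupp.single (m, i, j) (1 : C))
      ∈ VdBRel k A n C ρ M :=
    Submodule.subset_span (Or.inl (Or.inl (Or.inr ⟨c, m, i, j, rfl⟩)))
  have := vdbRel_mkQ_eq_zero k A n C ρ M hmem
  simp only [map_sub, map_smul] at this
  simp only [vdbGen_eq_mkQ]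
  linear_combination (norm := abel) this

lemma vdbGen_left (a : A) (m : M) (i j : Fin n) :
    vdbGen k A n C ρ M (a • m) i j = ∑ l, ρ a i l • vdbGen k A n C ρ M m l j := by
  have hmem : (Finsupp.single (a • m, i, j) 1
      - ∑ l, ρ a i l • Finsupp.single (m, l, j) (1 : C))
      ∈ VdBRel k A n C ρ M :=
    Submodule.subset_span (Or.inl (Or.inr ⟨a, m, i, j, rfl⟩))
  have := vdbRel_mkQ_eq_zero k A n C ρ M hmem
  simp only [map_sub, map_sum, map_smul, sub_eq_zero] at this
  simpa only [vdbGen_eq_mkQ] using this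

lemma vdbGen_right (b : A) (m : M) (i j : Fin n) :
    vdbGen k A n C ρ M (op b • m) i j = ∑ l, ρ b l j • vdbGen k A n C ρ M m i l := by
  have hmem : (Finsupp.single (op b • m, i, j) 1
      - ∑ l, ρ b l j • Finsupp.single (m, i, l) (1 : C))
      ∈ VdBRel k A n C ρ M :=
    Submodule.subset_span (Or.inr ⟨b, m, i, j, rfl⟩)
  have := vdbRel_mkQ_eq_zero k A n C ρ M hmem
  simp only [map_sub, map_sum, map_smul, sub_eq_zero] at this
  simpa only [vdbGen_eq_mkQ] using this

end VdB

theorem vandenBergh_functor_representable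
    (k : Type u) [Field k] (A : Type u) [Ring A] [Algebra k A]
    (n : ℕ) (hn : 1 ≤ n)
    (C : Type u) [CommRing C] [Algebra k C]
    (ρ : A →ₐ[k] Matrix (Fin n) (Fin n) C)
    (M : Type u) [AddCommGroup M] [Module k M]
    [Module A M] [Module Aᵐᵒᵖ M] [SMulCommClass A Aᵐᵒᵖ M]
    [IsScalarTower k A M] [IsScalarTower k Aᵐᵒᵖ M] :
    ∃ (MV : ModPkg k C) (μ : M →ₗ[k] Matrix (Fin n) (Fin n) MV.carrier),
      -- `μ` is an `A`-bimodule homomorphism `M → Mat_n(M_V)`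
      (∀ (a : A) (m : M), μ (a • m) = matLSmul (ρ a) (μ m)) ∧
      (∀ (b : A) (m : M), μ (op b • m) = matRSmul (μ m) (ρ b)) ∧
      -- universal property
      (∀ (L : Type u) [AddCommGroup L] [Module k L] [Module C L] [IsScalarTower k C L]
          (f : M →ₗ[k] Matrix (Fin n) (Fin n) L),
        (∀ (a : A) (m : M), f (a • m) = matLSmul (ρ a) (f m)) →
        (∀ (b : A) (m : M), f (op b • m) = matRSmul (f m) (ρ b)) →
        ∃! g : MV.carrier →ₗ[C] L, ∀ m : M, (μ m).map g = f m) := by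
  classical
  refine ⟨⟨VdBMod k A n C ρ M⟩, ?_, ?_, ?_, ?_⟩
  · -- μ
    exact
      { toFun := fun m => Matrix.of fun i j => vdbGen k A n C ρ M m i j
        map_add' := fun m m' => by
          ext i j
          simpa using vdbGen_add k A n C ρ M m m' i j
        map_smul' := fun c m => by
          ext i j
          simp only [Matrix.of_apply, RingHom.id_apply, Matrix.smul_apply]
          rw [vdbGen_smul k A n C ρ M c m i j, algebraMap_smul] }
  · intro a m
    ext i j
    simpa [matLSmul] using vdbGen_left k A n C ρ M a m i j
  · intro b m
    ext i j
    simpa [matRSmul] using vdbGen_right k A n C ρ M b m i j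
  · intro L _ _ _ _ f hfl hfr
    set g₀ : VdBFree n C M →ₗ[C] L :=
      Finsupp.linearCombination C (fun p : M × Fin n × Fin n => f p.1 p.2.1 p.2.2) with hg₀
    have hg₀single : ∀ (m : M) (i j : Fin n), g₀ (Finsupp.single (m, i, j) 1) = f m i j := by
      intro m i j
      simp [hg₀, Finsupp.linearCombination_single]
    have hle : VdBRel k A n C ρ M ≤ LinearMap.ker g₀ := by
      rw [VdBRel, Submodule.span_le]
      rintro x (((⟨m, m', i, j, rfl⟩ | ⟨c, m, i, j, rfl⟩) | ⟨a, m, i, j, rfl⟩) |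
        ⟨b, m, i, j, rfl⟩) <;>
        simp only [SetLike.mem_coe, LinearMap.mem_ker, map_sub, map_sum, map_smul,
          hg₀single]
      · rw [map_add f m m']
        simp [sub_sub]
      · simp [Matrix.smul_apply, algebraMap_smul]
      · rw [hfl a m]
        simp [matLSmul]
      · rw [hfr b m]
        simp [matRSmul]
    refine ⟨(VdBRel k A n C ρ M).liftQ g₀ hle, ?_, ?_⟩
    · intro m
      ext i j
      exact hg₀single m i j
    · intro g' hg'
      apply Submodule.linearMap_qext
      apply Finsupp.lhom_ext'
      rintro ⟨m, i, j⟩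
      apply LinearMap.ext_ring
      have h1 : g' (vdbGen k A n C ρ M m i j) = f m i j := by
        have := congrFun (congrFun (congrArg (fun X => X) (hg' m)) i) j
        simpa [Matrix.map_apply] using this
      have h2 : ((VdBRel k A n C ρ M).liftQ g₀ hle) (vdbGen k A n C ρ M m i j) = f m i j :=
        hg₀single m i j
      simpa [vdbGen_eq_mkQ, Finsupp.lsingle_apply] using h1.trans h2.symm
end

section
/- Let k be a field, A an associative unital k-algebra, n ≥ 1, and (A_V, π) a universal n-dimensional representation of A. Then for every A_V-module L, the map D ↦ Mat_n(D) ∘ π — sending a k-linear derivation D : A_V → L to the map a ↦ (D applied entrywise to π(a)) — is a bijection from the set of k-linear derivations of A_V into L onto the set of derivations of A into the A-bimodule Mat_n(L). This expresses the isomorphism (Ω¹_nc A)_V ≅ Ω¹_comm(A_V): the Van den Bergh functor takes the bimodule of noncommutative 1-forms of A to the module of Kähler differentials of A_V. -/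
/-!
STATEMENT 12: For a universal n-dimensional representation `(A_V, π)` of `A` and any
`A_V`-module `L`, the map `D ↦ Mat_n(D) ∘ π` is a bijection from `k`-linear derivations
`A_V → L` onto derivations of `A` into the `A`-bimodule `Mat_n(L)` (where
`a·X·b = π(a) X π(b)`). This expresses `(Ω¹_nc A)_V ≅ Ω¹_comm(A_V)`.
-/

universe u

open TrivSqZeroExt

lemma matLSmul_one {C N : Type*} [CommRing C] [AddCommGroup N] [Module C N] {n : ℕ}
    (X : Matrix (Fin n) (Fin n) N) : matLSmul (1 : Matrix (Fin n) (Fin n) C) X = X := by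
  ext i j
  simp [matLSmul, Matrix.one_apply, ite_smul]

lemma matRSmul_one {C N : Type*} [CommRing C] [AddCommGroup N] [Module C N] {n : ℕ}
    (X : Matrix (Fin n) (Fin n) N) : matRSmul X (1 : Matrix (Fin n) (Fin n) C) = X := by
  ext i j
  simp [matRSmul, Matrix.one_apply, ite_smul]

def opModule (AV L : Type*) [CommRing AV] [AddCommGroup L] [Module AV L] :
    Module AVᵐᵒᵖ L :=
  Module.compHom L ((RingHom.id AV).fromOpposite mul_comm)

attribute [local instance] opModule

def centralScalar (AV L : Type*) [CommRing AV] [AddCommGroup L] [Module AV L] :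
    IsCentralScalar AV L := ⟨fun _ _ => rfl⟩

attribute [local instance] centralScalar

def smulCommCl (AV L : Type*) [CommRing AV] [AddCommGroup L] [Module AV L] :
    SMulCommClass AV AVᵐᵒᵖ L := ⟨fun a b x => smul_comm a b.unop x⟩

attribute [local instance] smulCommCl

def towerOp (k AV L : Type*) [CommRing k] [CommRing AV] [Algebra k AV]
    [AddCommGroup L] [Module k L] [Module AV L] [IsScalarTower k AV L] :
    IsScalarTower k AVᵐᵒᵖ L :=
  ⟨fun c b x => by
    show ((c • b).unop) • x = c • (b.unop • x)
    rw [MulOpposite.unop_smul, smul_assoc]⟩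

attribute [local instance] towerOp

/-- The algebra hom `AV → TrivSqZeroExt AV L` attached to a derivation. -/
def derivToTsze {k AV L : Type u} [Field k] [CommRing AV] [Algebra k AV]
    [AddCommGroup L] [Module k L] [Module AV L] [IsScalarTower k AV L]
    (D : Derivation k AV L) : AV →ₐ[k] TrivSqZeroExt AV L where
  toFun x := inl x + inr (D x)
  map_one' := by simp
  map_mul' x y := by
    refine TrivSqZeroExt.ext ?_ ?_ <;>
      simp [TrivSqZeroExt.snd_mul, D.leibniz]
  map_zero' := by simp
  map_add' x y := by
    refine TrivSqZeroExt.ext ?_ ?_ <;> simp [add_add_add_comm]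
  commutes' c := by
    refine TrivSqZeroExt.ext ?_ ?_ <;> simp [TrivSqZeroExt.algebraMap_eq_inl']

lemma derivToTsze_apply {k AV L : Type u} [Field k] [CommRing AV] [Algebra k AV]
    [AddCommGroup L] [Module k L] [Module AV L] [IsScalarTower k AV L]
    (D : Derivation k AV L) (x : AV) : derivToTsze D x = inl x + inr (D x) := rfl

lemma theta_one {k A AV L : Type u} [Field k] [Ring A] [Algebra k A] {n : ℕ}
    [CommRing AV] [Algebra k AV]
    [AddCommGroup L] [Module k L] [Module AV L] [IsScalarTower k AV L]
    (π : A →ₐ[k] Matrix (Fin n) (Fin n) AV)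
    (θ : A →ₗ[k] Matrix (Fin n) (Fin n) L)
    (hθ : ∀ a b : A, θ (a * b) = matLSmul (π a) (θ b) + matRSmul (θ a) (π b)) :
    θ 1 = 0 := by
  have h := hθ 1 1
  rw [mul_one, _root_.map_one π, matLSmul_one, matRSmul_one] at h
  have h2 : θ 1 + 0 = θ 1 + θ 1 := by rw [add_zero]; exact h
  exact (add_left_cancel h2).symm

/-- The `k`-linear map `A → Matₙ(TrivSqZeroExt AV L)` attached to `(π, θ)`. -/
def thetaLin {k A AV L : Type u} [Field k] [Ring A] [Algebra k A] {n : ℕ}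
    [CommRing AV] [Algebra k AV]
    [AddCommGroup L] [Module k L] [Module AV L] [IsScalarTower k AV L]
    (π : A →ₐ[k] Matrix (Fin n) (Fin n) AV)
    (θ : A →ₗ[k] Matrix (Fin n) (Fin n) L) :
    A →ₗ[k] Matrix (Fin n) (Fin n) (TrivSqZeroExt AV L) where
  toFun a := Matrix.of fun i j => inl (π a i j) + inr (θ a i j)
  map_add' a b := by
    ext i j <;> simp [add_add_add_comm]
  map_smul' c a := by
    ext i j <;>
      simp [Matrix.smul_apply, TrivSqZeroExt.snd_smul, TrivSqZeroExt.fst_smul]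

/-- The algebra hom `A → Matₙ(TrivSqZeroExt AV L)` attached to θ. -/
def thetaHom {k A AV L : Type u} [Field k] [Ring A] [Algebra k A] {n : ℕ}
    [CommRing AV] [Algebra k AV]
    [AddCommGroup L] [Module k L] [Module AV L] [IsScalarTower k AV L]
    (π : A →ₐ[k] Matrix (Fin n) (Fin n) AV)
    (θ : A →ₗ[k] Matrix (Fin n) (Fin n) L)
    (hθ : ∀ a b : A, θ (a * b) = matLSmul (π a) (θ b) + matRSmul (θ a) (π b)) :
    A →ₐ[k] Matrix (Fin n) (Fin n) (TrivSqZeroExt AV L) :=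
  AlgHom.ofLinearMap (thetaLin π θ)
    (by
      ext i j <;>
        simp [thetaLin, theta_one π θ hθ, Matrix.one_apply,
          apply_ite (TrivSqZeroExt.fst (M := L)), apply_ite (TrivSqZeroExt.snd (R := AV))])
    (by
      intro a b
      ext i j
      · simp [thetaLin, Matrix.mul_apply, map_mul, TrivSqZeroExt.fst_sum]
      · simp only [thetaLin, LinearMap.coe_mk, AddHom.coe_mk, Matrix.of_apply,
          Matrix.mul_apply, TrivSqZeroExt.snd_sum, TrivSqZeroExt.snd_mul,
          TrivSqZeroExt.snd_add, TrivSqZeroExt.snd_inl, TrivSqZeroExt.snd_inr,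
          TrivSqZeroExt.fst_add, TrivSqZeroExt.fst_inl, TrivSqZeroExt.fst_inr,
          zero_add, add_zero, op_smul_eq_smul]
        rw [hθ a b]
        simp [matLSmul, matRSmul, Finset.sum_add_distrib])

lemma thetaHom_apply {k A AV L : Type u} [Field k] [Ring A] [Algebra k A] {n : ℕ}
    [CommRing AV] [Algebra k AV]
    [AddCommGroup L] [Module k L] [Module AV L] [IsScalarTower k AV L]
    (π : A →ₐ[k] Matrix (Fin n) (Fin n) AV)
    (θ : A →ₗ[k] Matrix (Fin n) (Fin n) L)
    (hθ : ∀ a b : A, θ (a * b) = matLSmul (π a) (θ b) + matRSmul (θ a) (π b))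
    (a : A) (i j : Fin n) :
    thetaHom π θ hθ a i j = inl (π a i j) + inr (θ a i j) := rfl

theorem kaehler_differentials_of_representation_scheme
    (k : Type u) [Field k] (A : Type u) [Ring A] [Algebra k A]
    (n : ℕ) (hn : 1 ≤ n)
    (AV : Type u) [CommRing AV] [Algebra k AV]
    (π : A →ₐ[k] Matrix (Fin n) (Fin n) AV)
    -- `(AV, π)` is a universal n-dimensional representation of `A`:
    (huniv : ∀ (B : Type u) [CommRing B] [Algebra k B],
      Function.Bijective (fun φ : AV →ₐ[k] B => (AlgHom.mapMatrix φ).comp π))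
    (L : Type u) [AddCommGroup L] [Module k L] [Module AV L] [IsScalarTower k AV L] :
    -- for every derivation `D : A_V → L`, the map `a ↦ Mat_n(D)(π a)` is a derivation
    -- of `A` into `Mat_n(L)` ...
    (∀ (D : Derivation k AV L) (a b : A),
      (π (a * b)).map ⇑D
        = matLSmul (π a) ((π b).map ⇑D) + matRSmul ((π a).map ⇑D) (π b)) ∧
    -- ... and `D ↦ Mat_n(D) ∘ π` is a bijection onto the set of such derivations
    (∀ θ : A →ₗ[k] Matrix (Fin n) (Fin n) L,
      (∀ a b : A, θ (a * b) = matLSmul (π a) (θ b) + matRSmul (θ a) (π b)) →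
      ∃! D : Derivation k AV L, ∀ a : A, (π a).map ⇑D = θ a) := by
  constructor
  · intro D a b
    ext i j
    simp [Matrix.map_apply, map_mul, Matrix.mul_apply, matLSmul, matRSmul,
      Derivation.leibniz, Finset.sum_add_distrib]
  · intro θ hθ
    obtain ⟨φ, hφ⟩ := (huniv (TrivSqZeroExt AV L)).2 (thetaHom π θ hθ)
    have hφ' : ∀ (a : A) (i j : Fin n),
        φ (π a i j) = inl (π a i j) + inr (θ a i j) := by
      intro a i j
      have h := DFunLike.congr_fun hφ a
      have h2 := congrFun (congrFun (congrArg (fun M => (M : Matrix _ _ _)) h) i) j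
      simpa [AlgHom.mapMatrix_apply, Matrix.map_apply, thetaHom_apply] using h2
    have hfst : ∀ x : AV, (φ x).fst = x := by
      have h : ((TrivSqZeroExt.fstHom k AV L).comp φ) = AlgHom.id k AV := by
        apply (huniv AV).1
        show (AlgHom.mapMatrix ((TrivSqZeroExt.fstHom k AV L).comp φ)).comp π
          = (AlgHom.mapMatrix (AlgHom.id k AV)).comp π
        ext a : 1
        ext i j
        simp [AlgHom.mapMatrix_apply, Matrix.map_apply, hφ' a i j]
      intro x
      exact DFunLike.congr_fun h x
    set D : Derivation k AV L :=
      { toLinearMap := (TrivSqZeroExt.sndHom AV L).restrictScalars k ∘ₗ φ.toLinearMap,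
        map_one_eq_zero' := by simp,
        leibniz' := by
          intro a b
          simp only [LinearMap.comp_apply, LinearMap.coe_restrictScalars,
            AlgHom.toLinearMap_apply, TrivSqZeroExt.sndHom_apply, map_mul,
            TrivSqZeroExt.snd_mul, hfst, op_smul_eq_smul] } with hDdef
    have hDx : ∀ x : AV, D x = (φ x).snd := fun x => rfl
    have hD : ∀ a : A, (π a).map ⇑D = θ a := by
      intro a
      ext i j
      simp [Matrix.map_apply, hDx, hφ' a i j]
    refine ⟨D, hD, ?_⟩
    intro D' hD'
    have key : ∀ (E : Derivation k AV L), (∀ a : A, (π a).map ⇑E = θ a) →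
        (AlgHom.mapMatrix (derivToTsze E)).comp π = thetaHom π θ hθ := by
      intro E hE
      ext a : 1
      have hEa : ∀ i j : Fin n, E (π a i j) = θ a i j := by
        intro i j
        have h2 := congrFun (congrFun (congrArg (fun M => (M : Matrix _ _ _)) (hE a)) i) j
        simpa [Matrix.map_apply] using h2
      ext i j <;>
        simp [AlgHom.comp_apply, AlgHom.mapMatrix_apply, Matrix.map_apply,
          derivToTsze_apply, thetaHom_apply, hEa]
    have h := (huniv (TrivSqZeroExt AV L)).1 ((key D' hD').trans (key D hD).symm)
    ext x
    have h3 := congrArg TrivSqZeroExt.snd (DFunLike.congr_fun h x)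
    simpa [derivToTsze_apply] using h3
end
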